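/- If E_α ≠ 0, then α = s + j for some eigenvalue s of the endomorphism induced by h on M/n̄ M and some integer j ≤ 0. In particular, for every m ∈ ℝ the set {α ∈ ℂ : E_α ≠ 0 and Re α > m} is finite. -/

import Mathlib

set_option linter.unusedSectionVars false

noncomputable section

namespace GeomJacquet

variable (g : Type*) [LieRing g] [LieAlgebra ℂ g]

/-- The nilpotent subalgebra `n̄ ⊆ g`: the sum of the eigenspaces of `ad H` with negative
(integer) eigenvalues. -/
def nbar (H : g) : Submodule ℂ g :=
  ⨆ z : {z : ℤ // z < 0}, Module.End.eigenspace (LieAlgebra.ad ℂ g H) ((z : ℤ) : ℂ)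

/-- `ad H` is diagonalizable with all eigenvalues in `ℤ`. -/
def IsIntDiagonalizable (H : g) : Prop :=
  (⨆ z : ℤ, Module.End.eigenspace (LieAlgebra.ad ℂ g H) (z : ℂ)) = ⊤

variable (M : Type*) [AddCommGroup M] [Module ℂ M] [LieRingModule g M] [LieModule ℂ g M]

/-- The `n̄`-adic filtration `n̄^k M` on a representation `M` of `g`. -/
def fil (H : g) : ℕ → Submodule ℂ M
  | 0 => ⊤
  | k + 1 => Submodule.span ℂ
      {m : M | ∃ x ∈ nbar g H, ∃ v ∈ fil H k, ⁅x, v⁆ = m}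

/-- `M` is finitely generated as a module over `U(n̄)` (acting through the `g`-action):
there is a finite subset `S ⊆ M` such that the only `ℂ`-subspace of `M` containing `S` and
stable under the action of `n̄` is `M` itself. -/
def IsUnbarFG (H : g) : Prop :=
  ∃ S : Finset M, ∀ W : Submodule ℂ M, (↑S : Set M) ⊆ W →
    (∀ x ∈ nbar g H, ∀ m ∈ W, ⁅x, m⁆ ∈ W) → W = ⊤

theorem lie_mem_nbar (H : g) {x : g} (hx : x ∈ nbar g H) : ⁅H, x⁆ ∈ nbar g H := by
  revert hx
  refine fun hx => Submodule.iSup_induction _ (motive := fun y => ⁅H, y⁆ ∈ nbar g H) hx ?_ ?_ ?_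
  · rintro ⟨z, hz⟩ y hy
    have : ⁅H, y⁆ = ((z : ℤ) : ℂ) • y := by
      have := (Module.End.mem_eigenspace_iff).1 hy
      simpa [LieAlgebra.ad_apply] using this
    rw [this]
    exact Submodule.smul_mem _ _ (le_iSup (fun z : {z : ℤ // z < 0} =>
      Module.End.eigenspace (LieAlgebra.ad ℂ g H) ((z : ℤ) : ℂ)) ⟨z, hz⟩ hy)
  · simp
  · intro a b ha hb
    rw [lie_add]
    exact Submodule.add_mem _ ha hb

theorem lie_H_mem_fil (H : g) (k : ℕ) : ∀ m ∈ fil g M H k, ⁅H, m⁆ ∈ fil g M H k := by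
  induction k with
  | zero => intro m _; trivial
  | succ k ih =>
    intro m hm
    refine Submodule.span_induction ?_ ?_ ?_ ?_ hm
    · rintro m ⟨x, hx, v, hv, rfl⟩
      rw [leibniz_lie]
      exact Submodule.add_mem _
        (Submodule.subset_span ⟨⁅H, x⁆, lie_mem_nbar g H hx, v, hv, rfl⟩)
        (Submodule.subset_span ⟨x, hx, ⁅H, v⁆, ih v hv, rfl⟩)
    · simp
    · intro a b _ _ ha hb; rw [lie_add]; exact Submodule.add_mem _ ha hb
    · intro c a _ ha; rw [lie_smul]; exact Submodule.smul_mem _ c ha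

theorem fil_succ_le (H : g) (k : ℕ) : fil g M H (k + 1) ≤ fil g M H k := by
  induction k with
  | zero => exact le_top
  | succ k ih =>
    refine Submodule.span_le.2 ?_
    rintro m ⟨x, hx, v, hv, rfl⟩
    exact Submodule.subset_span ⟨x, hx, v, ih hv, rfl⟩

/-- The endomorphism of `M/n̄^k M` induced by (the action of) `h`. -/
def hQuot (H : g) (k : ℕ) : Module.End ℂ (M ⧸ fil g M H k) :=
  Submodule.mapQ _ _ ((LieModule.toEnd ℂ g M) H)
    (fun m hm => by
      simpa [Submodule.mem_comap, LieModule.toEnd_apply_apply] using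
        lie_H_mem_fil g M H k m hm)

/-- The canonical projection `M/n̄^(k+1) M → M/n̄^k M`. -/
def proj (H : g) (k : ℕ) : (M ⧸ fil g M H (k + 1)) →ₗ[ℂ] M ⧸ fil g M H k :=
  Submodule.mapQ _ _ LinearMap.id (fun _ hm => fil_succ_le g M H k hm)

/-- The `n̄`-adic completion `M̂ = lim_k M/n̄^k M`, realized as the space of compatible
sequences in `Π k, M/n̄^k M`. -/
def completion (H : g) : Submodule ℂ (Π k : ℕ, M ⧸ fil g M H k) where
  carrier := {v | ∀ k, proj g M H k (v (k + 1)) = v k}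
  zero_mem' := by intro k; simp
  add_mem' := by intro u v hu hv k; simp [map_add, hu k, hv k]
  smul_mem' := by intro c v hv k; simp [map_smul, hv k]

theorem proj_hQuot (H : g) (k : ℕ) (w : M ⧸ fil g M H (k + 1)) :
    proj g M H k (hQuot g M H (k + 1) w) = hQuot g M H k (proj g M H k w) := by
  obtain ⟨m, rfl⟩ := Submodule.Quotient.mk_surjective _ w
  simp [proj, hQuot, Submodule.mapQ_apply]

/-- The endomorphism `ĥ` of the completion `M̂` induced componentwise by `h`. -/
def hhat (H : g) : Module.End ℂ (completion g M H) where
  toFun v := ⟨fun k => hQuot g M H k (v.1 k), by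
    intro k; rw [proj_hQuot, v.2 k]⟩
  map_add' u v := by ext k; simp
  map_smul' c v := by ext k; simp

/-- The canonical map `M → M̂`. -/
def toCompletion (H : g) : M →ₗ[ℂ] completion g M H where
  toFun m := ⟨fun k => Submodule.Quotient.mk m, by
    intro k; simp [proj, Submodule.mapQ_apply]⟩
  map_add' u v := by ext k; simp
  map_smul' c v := by ext k; simp

/-- `E_α ⊆ M̂`: the generalized `α`-eigenspace `⋃_N ker((ĥ - α)^N)` of `ĥ`. -/
def E (H : g) (α : ℂ) : Submodule ℂ (completion g M H) :=
  Module.End.maxGenEigenspace (hhat g M H) α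


/-! ### Auxiliary machinery -/

open Polynomial

theorem fil_one_mem (H : g) (x : g) (hx : x ∈ nbar g H) (m : M) :
    ⁅x, m⁆ ∈ fil g M H 1 :=
  Submodule.subset_span ⟨x, hx, m, Submodule.mem_top, rfl⟩

theorem hQuot_mk (H : g) (k : ℕ) (v : M) :
    hQuot g M H k (Submodule.Quotient.mk v) = Submodule.Quotient.mk ⁅H, v⁆ := by
  simp [hQuot, Submodule.mapQ_apply]

theorem aeval_hQuot_mk (H : g) (k : ℕ) (p : ℂ[X]) (v : M) :
    aeval (hQuot g M H k) p (Submodule.Quotient.mk v)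
      = Submodule.Quotient.mk (aeval (LieModule.toEnd ℂ g M H) p v) := by
  induction p using Polynomial.induction_on generalizing v with
  | C a => simp [Module.algebraMap_end_apply]
  | add p q hp hq => simp [hp v, hq v]
  | monomial n a ih =>
      have h1 : (C a * X ^ (n + 1) : ℂ[X]) = C a * X ^ n * X := by ring
      simp only [h1, map_mul, Module.End.mul_apply, aeval_X, hQuot_mk,
        LieModule.toEnd_apply_apply]
      simp only [map_mul, Module.End.mul_apply] at ih
      exact ih ⁅H, v⁆

theorem aeval_mem_fil (H : g) (k : ℕ) (p : ℂ[X]) :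
    ∀ v ∈ fil g M H k, aeval (LieModule.toEnd ℂ g M H) p v ∈ fil g M H k := by
  induction p using Polynomial.induction_on with
  | C a =>
      intro v hv
      simpa [Module.algebraMap_end_apply] using Submodule.smul_mem _ a hv
  | add p q hp hq =>
      intro v hv
      simpa [map_add] using Submodule.add_mem _ (hp v hv) (hq v hv)
  | monomial n a ih =>
      intro v hv
      have h1 : (C a * X ^ (n + 1) : ℂ[X]) = C a * X ^ n * X := by ring
      rw [h1, map_mul, aeval_X, Module.End.mul_apply, LieModule.toEnd_apply_apply]
      exact ih _ (lie_H_mem_fil g M H k v hv)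

theorem aeval_lie_eq (H : g) {x : g} {c : ℂ} (hx : ⁅H, x⁆ = c • x) (p : ℂ[X]) (w : M) :
    aeval (LieModule.toEnd ℂ g M H) p ⁅x, w⁆
      = ⁅x, aeval (LieModule.toEnd ℂ g M H) (p.comp (X + C c)) w⁆ := by
  have hXC : aeval (LieModule.toEnd ℂ g M H) (X + C c)
      = LieModule.toEnd ℂ g M H + c • (1 : Module.End ℂ M) := by
    rw [map_add, aeval_X, aeval_C, Algebra.algebraMap_eq_smul_one]
  rw [aeval_comp, hXC]
  set F := LieModule.toEnd ℂ g M H with hF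
  set G := F + c • (1 : Module.End ℂ M) with hG
  induction p using Polynomial.induction_on generalizing w with
  | C a => simp [Module.algebraMap_end_apply, lie_smul]
  | add p q hp hq =>
      simp only [map_add, LinearMap.add_apply, hp w, hq w, lie_add]
  | monomial n a ih =>
      have h1 : (C a * X ^ (n + 1) : ℂ[X]) = C a * X ^ n * X := by ring
      have hGw : G w = ⁅H, w⁆ + c • w := by
        rw [hG, hF]
        simp [LieModule.toEnd_apply_apply]
      have hFlie : F ⁅x, w⁆ = ⁅x, G w⁆ := by
        calc F ⁅x, w⁆ = ⁅H, ⁅x, w⁆⁆ := by rw [hF, LieModule.toEnd_apply_apply]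
          _ = ⁅⁅H, x⁆, w⁆ + ⁅x, ⁅H, w⁆⁆ := leibniz_lie H x w
          _ = ⁅x, ⁅H, w⁆⁆ + c • ⁅x, w⁆ := by rw [hx, smul_lie, add_comm]
          _ = ⁅x, G w⁆ := by rw [hGw, lie_add, lie_smul]
      simp only [h1, map_mul, Module.End.mul_apply, aeval_X, hFlie]
      simp only [map_mul, Module.End.mul_apply] at ih
      exact ih (G w)

/-- The product of shifted copies of the minimal polynomial of `hQuot 1` which annihilates
the graded piece `fil k / fil (k+1)`. -/
def Qp (H : g) (B k : ℕ) : ℂ[X] :=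
  ∏ j ∈ Finset.Icc (k : ℤ) ((k * B : ℕ) : ℤ),
    (minpoly ℂ (hQuot g M H 1)).comp (X + C (j : ℂ))

theorem aeval_Qp_mem (H : g) (B : ℕ) (hB1 : 1 ≤ B)
    (hB : ∀ z : ℤ, z < 0 → Module.End.HasEigenvalue (LieAlgebra.ad ℂ g H) ((z : ℤ) : ℂ) →
      -(B : ℤ) ≤ z) :
    ∀ k : ℕ, ∀ u ∈ fil g M H k,
      aeval (LieModule.toEnd ℂ g M H) (Qp g M H B k) u ∈ fil g M H (k + 1) := by
  intro k
  induction k with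
  | zero =>
      intro u _
      have hQ0 : Qp g M H B 0 = minpoly ℂ (hQuot g M H 1) := by
        simp [Qp]
      rw [hQ0, ← Submodule.Quotient.mk_eq_zero (fil g M H 1), ← aeval_hQuot_mk,
        minpoly.aeval, LinearMap.zero_apply]
  | succ k ih =>
      intro u hu
      refine Submodule.span_induction ?_ ?_ ?_ ?_ hu
      · rintro m ⟨x, hx, v, hv, rfl⟩
        refine Submodule.iSup_induction _
          (motive := fun y => aeval (LieModule.toEnd ℂ g M H) (Qp g M H B (k + 1)) ⁅y, v⁆
            ∈ fil g M H (k + 2)) hx ?_ ?_ ?_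
        · rintro ⟨z, hz⟩ x hxz
          by_cases hx0 : x = 0
          · simp [hx0]
          have hev : Module.End.HasEigenvalue (LieAlgebra.ad ℂ g H) ((z : ℤ) : ℂ) :=
            Module.End.hasEigenvalue_of_hasEigenvector ⟨hxz, hx0⟩
          have hzB : -(B : ℤ) ≤ z := hB z hz hev
          have hz1 : (z : ℤ) ≤ -1 := by omega
          have hxc : ⁅H, x⁆ = ((z : ℤ) : ℂ) • x := by
            have := Module.End.mem_eigenspace_iff.1 hxz
            simpa [LieAlgebra.ad_apply] using this
          rw [aeval_lie_eq g M H hxc]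
          have hxn : x ∈ nbar g H :=
            le_iSup (fun z : {z : ℤ // z < 0} =>
              Module.End.eigenspace (LieAlgebra.ad ℂ g H) ((z : ℤ) : ℂ)) ⟨z, hz⟩ hxz
          refine Submodule.subset_span ⟨x, hxn, _, ?_, rfl⟩
          -- Now show the inner vector lies in `fil (k+1)`.
          set P := minpoly ℂ (hQuot g M H 1) with hP
          have hcomp : (Qp g M H B (k + 1)).comp (X + C ((z : ℤ) : ℂ))
              = ∏ j ∈ Finset.Icc ((k + 1 : ℕ) : ℤ) (((k + 1) * B : ℕ) : ℤ),
                  P.comp (X + C (((j + z : ℤ)) : ℂ)) := by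
            rw [Qp, prod_comp]
            refine Finset.prod_congr rfl ?_
            intro j hj
            rw [comp_assoc]
            congr 1
            simp only [add_comp, X_comp, C_comp]
            push_cast
            rw [add_assoc, ← C_add, add_comm ((z : ℤ) : ℂ)]
          have hre : (∏ j ∈ Finset.Icc ((k + 1 : ℕ) : ℤ) (((k + 1) * B : ℕ) : ℤ),
                  P.comp (X + C (((j + z : ℤ)) : ℂ)))
              = ∏ i ∈ Finset.Icc (((k + 1 : ℕ) : ℤ) + z) ((((k + 1) * B : ℕ) : ℤ) + z),
                  P.comp (X + C ((i : ℤ) : ℂ)) := by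
            rw [← Finset.map_add_right_Icc, Finset.prod_map]
            rfl
          have hsub : Finset.Icc ((k : ℕ) : ℤ) ((k * B : ℕ) : ℤ)
              ⊆ Finset.Icc (((k + 1 : ℕ) : ℤ) + z) ((((k + 1) * B : ℕ) : ℤ) + z) := by
            apply Finset.Icc_subset_Icc
            · push_cast; omega
            · have hmul : (k + 1) * B = k * B + B := by ring
              rw [hmul]; push_cast; omega
          have hsplit : (∏ i ∈ Finset.Icc (((k + 1 : ℕ) : ℤ) + z) ((((k + 1) * B : ℕ) : ℤ) + z),
                  P.comp (X + C ((i : ℤ) : ℂ)))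
              = (∏ i ∈ Finset.Icc (((k + 1 : ℕ) : ℤ) + z) ((((k + 1) * B : ℕ) : ℤ) + z) \
                    Finset.Icc ((k : ℕ) : ℤ) ((k * B : ℕ) : ℤ),
                  P.comp (X + C ((i : ℤ) : ℂ))) * Qp g M H B k := by
            rw [Qp, ← hP, Finset.prod_sdiff hsub]
          rw [hcomp, hre, hsplit, map_mul, Module.End.mul_apply]
          exact aeval_mem_fil g M H (k + 1) _ _ (ih v hv)
        · simp
        · intro a b ha hb
          rw [add_lie, map_add]
          exact Submodule.add_mem _ ha hb
      · simp
      · intro a b _ _ ha hb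
        rw [map_add]
        exact Submodule.add_mem _ ha hb
      · intro c a _ ha
        rw [map_smul]
        exact Submodule.smul_mem _ c ha

theorem aeval_prod_Qp_mem (H : g) (B : ℕ) (hB1 : 1 ≤ B)
    (hB : ∀ z : ℤ, z < 0 → Module.End.HasEigenvalue (LieAlgebra.ad ℂ g H) ((z : ℤ) : ℂ) →
      -(B : ℤ) ≤ z) :
    ∀ (k : ℕ) (v : M),
      aeval (LieModule.toEnd ℂ g M H) (∏ i ∈ Finset.range k, Qp g M H B i) v
        ∈ fil g M H k := by
  intro k
  induction k with
  | zero => intro v; trivial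
  | succ k ih =>
      intro v
      have h1 : (∏ i ∈ Finset.range (k + 1), Qp g M H B i)
          = Qp g M H B k * ∏ i ∈ Finset.range k, Qp g M H B i := by
        rw [Finset.prod_range_succ]; ring
      rw [h1, map_mul, Module.End.mul_apply]
      exact aeval_Qp_mem g M H B hB1 hB k _ (ih v)

theorem hQuot_eigenvalue (H : g) (B : ℕ) (hB1 : 1 ≤ B)
    (hB : ∀ z : ℤ, z < 0 → Module.End.HasEigenvalue (LieAlgebra.ad ℂ g H) ((z : ℤ) : ℂ) →
      -(B : ℤ) ≤ z)
    [FiniteDimensional ℂ (M ⧸ fil g M H 1)]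
    (k : ℕ) (α : ℂ) (hα : (hQuot g M H k).HasEigenvalue α) :
    ∃ (s : ℂ) (j : ℤ), (hQuot g M H 1).HasEigenvalue s ∧ j ≤ 0 ∧ α = s + (j : ℂ) := by
  obtain ⟨v, hv⟩ := hα.exists_hasEigenvector
  obtain ⟨u, rfl⟩ := Submodule.Quotient.mk_surjective _ v
  set G := ∏ i ∈ Finset.range k, Qp g M H B i with hG
  have h1 : aeval (hQuot g M H k) G (Submodule.Quotient.mk u) = 0 := by
    rw [aeval_hQuot_mk]
    exact (Submodule.Quotient.mk_eq_zero _).2 (aeval_prod_Qp_mem g M H B hB1 hB k u)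
  have h2 : G.eval α • (Submodule.Quotient.mk u : M ⧸ fil g M H k) = 0 := by
    rw [← Module.End.aeval_apply_of_hasEigenvector hv]; exact h1
  have h3 : G.eval α = 0 := by
    rcases smul_eq_zero.1 h2 with h | h
    · exact h
    · exact absurd h hv.2
  rw [hG, Polynomial.eval_prod] at h3
  obtain ⟨i, hi, hQi⟩ := Finset.prod_eq_zero_iff.1 h3
  rw [Qp, Polynomial.eval_prod] at hQi
  obtain ⟨j, hj, hPj⟩ := Finset.prod_eq_zero_iff.1 hQi
  rw [eval_comp, eval_add, eval_X, eval_C] at hPj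
  have hj0 : 0 ≤ j := le_trans (by positivity) (Finset.mem_Icc.1 hj).1
  refine ⟨α + (j : ℂ), -j, Module.End.hasEigenvalue_of_isRoot hPj, by omega, ?_⟩
  push_cast
  ring

theorem finiteDimensional_quot_one (H : g) (hFG : IsUnbarFG g M H) :
    FiniteDimensional ℂ (M ⧸ fil g M H 1) := by
  obtain ⟨S, hS⟩ := hFG
  have hW : (Submodule.span ℂ (S : Set M) ⊔ fil g M H 1) = ⊤ := by
    apply hS
    · exact fun s hs => Submodule.mem_sup_left (Submodule.subset_span hs)
    · intro x hx m _
      exact Submodule.mem_sup_right (fil_one_mem g M H x hx m)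
  have hmap : Submodule.span ℂ ((fil g M H 1).mkQ '' (S : Set M)) = ⊤ := by
    have h1 : Submodule.map (fil g M H 1).mkQ ⊤ = ⊤ := by
      rw [Submodule.map_top, Submodule.range_mkQ]
    rw [← hW, Submodule.map_sup, Submodule.map_span] at h1
    have h2 : Submodule.map (fil g M H 1).mkQ (fil g M H 1) = ⊥ := by
      apply le_antisymm _ bot_le
      rintro _ ⟨x, hx, rfl⟩
      simpa using (Submodule.Quotient.mk_eq_zero _).2 hx
    rw [h2, sup_bot_eq] at h1
    exact h1
  have : Module.Finite ℂ (M ⧸ fil g M H 1) := by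
    rw [Module.finite_def]
    rw [← hmap]
    exact Submodule.fg_span ((S.finite_toSet).image _)
  exact this

theorem exists_hQuot_eigenvalue (H : g) {α : ℂ} (hα : E g M H α ≠ ⊥) :
    ∃ k : ℕ, (hQuot g M H k).HasEigenvalue α := by
  obtain ⟨v, hv, hv0⟩ := (Submodule.ne_bot_iff _).1 hα
  obtain ⟨N, hN⟩ := (Module.End.mem_maxGenEigenspace _ _ _).1 hv
  have hex : ∃ w : completion g M H, w ≠ 0 ∧ hhat g M H w = α • w := by
    clear hv
    induction N generalizing v with
    | zero =>
        exfalso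
        apply hv0
        simpa using hN
    | succ N ih =>
        by_cases h0 : (hhat g M H - α • (1 : Module.End ℂ (completion g M H))) v = 0
        · refine ⟨v, hv0, ?_⟩
          have := sub_eq_zero.1 h0
          simpa using this
        · rw [pow_succ, Module.End.mul_apply] at hN
          exact ih _ h0 hN
  obtain ⟨w, hw0, hweq⟩ := hex
  have hkex : ∃ k, (w : ∀ k : ℕ, M ⧸ fil g M H k) k ≠ 0 := by
    by_contra hall
    push_neg at hall
    exact hw0 (Subtype.ext (funext hall))
  obtain ⟨k, hk⟩ := hkex
  have hcomp : hQuot g M H k ((w : ∀ k : ℕ, M ⧸ fil g M H k) k)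
      = α • (w : ∀ k : ℕ, M ⧸ fil g M H k) k := by
    have := congrFun (congrArg Subtype.val hweq) k
    exact this
  exact ⟨k, Module.End.hasEigenvalue_of_hasEigenvector
    ⟨Module.End.mem_eigenspace_iff.2 hcomp, hk⟩⟩

/-- If `E_α ≠ 0` then `α = s + j` with `s` an eigenvalue of the endomorphism induced by
`h` on `M/n̄ M` and `j ∈ ℤ`, `j ≤ 0`; in particular, for every `m ∈ ℝ` the set of `α` with
`E_α ≠ 0` and `Re α > m` is finite. -/
theorem eigenvalues_of_hhat_bounded
    [FiniteDimensional ℂ g] (H : g) (hdiag : IsIntDiagonalizable g H)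
    (hFG : IsUnbarFG g M H) :
    (∀ α : ℂ, E g M H α ≠ ⊥ →
      ∃ (s : ℂ) (j : ℤ), Module.End.HasEigenvalue (hQuot g M H 1) s ∧
        j ≤ 0 ∧ α = s + (j : ℂ)) ∧
    (∀ m : ℝ, {α : ℂ | E g M H α ≠ ⊥ ∧ m < α.re}.Finite) := by
  classical
  -- choose a bound `B` for the negative eigenvalues of `ad H`
  have hfinZ : Set.Finite {z : ℤ | Module.End.HasEigenvalue (LieAlgebra.ad ℂ g H) ((z : ℤ) : ℂ)} := by
    have hfinC : Set.Finite (Module.End.HasEigenvalue (LieAlgebra.ad ℂ g H)) :=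
      Module.End.finite_hasEigenvalue (LieAlgebra.ad ℂ g H)
    have : {z : ℤ | Module.End.HasEigenvalue (LieAlgebra.ad ℂ g H) ((z : ℤ) : ℂ)}
        = (fun z : ℤ => (z : ℂ)) ⁻¹' (Module.End.HasEigenvalue (LieAlgebra.ad ℂ g H)) := rfl
    rw [this]
    exact Set.Finite.preimage (Set.injOn_of_injective (fun a b h => by exact_mod_cast h)) hfinC
  obtain ⟨b, hb⟩ := hfinZ.bddBelow
  set B : ℕ := max 1 (-b).toNat with hBdef
  have hB1 : 1 ≤ B := le_max_left _ _
  have hB : ∀ z : ℤ, z < 0 → Module.End.HasEigenvalue (LieAlgebra.ad ℂ g H) ((z : ℤ) : ℂ) →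
      -(B : ℤ) ≤ z := by
    intro z hz hev
    have h1 : b ≤ z := hb hev
    have h2 : -b ≤ ((-b).toNat : ℤ) := Int.self_le_toNat (-b)
    have h3 : ((-b).toNat : ℤ) ≤ (B : ℤ) := by exact_mod_cast le_max_right 1 (-b).toNat
    omega
  haveI : FiniteDimensional ℂ (M ⧸ fil g M H 1) := finiteDimensional_quot_one g M H hFG
  have part1 : ∀ α : ℂ, E g M H α ≠ ⊥ →
      ∃ (s : ℂ) (j : ℤ), Module.End.HasEigenvalue (hQuot g M H 1) s ∧
        j ≤ 0 ∧ α = s + (j : ℂ) := by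
    intro α hα
    obtain ⟨k, hk⟩ := exists_hQuot_eigenvalue g M H hα
    exact hQuot_eigenvalue g M H B hB1 hB k α hk
  refine ⟨part1, ?_⟩
  intro m
  have hfin1 : Set.Finite (Module.End.HasEigenvalue (hQuot g M H 1)) :=
    Module.End.finite_hasEigenvalue _
  refine Set.Finite.subset (hfin1.biUnion (fun s _ =>
    (Set.finite_Icc (⌈m - s.re⌉) 0).image (fun j : ℤ => s + (j : ℂ)))) ?_
  rintro α ⟨hE, hre⟩
  obtain ⟨s, j, hs, hj, rfl⟩ := part1 α hE
  refine Set.mem_biUnion hs ⟨j, ?_, rfl⟩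
  have hre' : m < s.re + (j : ℝ) := by
    simpa [Complex.add_re, Complex.intCast_re] using hre
  exact Set.mem_Icc.2 ⟨Int.ceil_le.2 (by linarith), hj⟩

end GeomJacquet
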